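/- Let a ≥ 2. Define σ₁ = Σ_{n≥2} [2aπ(n−1/2)⁶ − 5(n−1/2)⁴]/(aπ/32 − 5/16) · e^{−aπ(n²−n)} and σ₂ = Σ_{n≥2} [2aπ(n−1/2)² − 1]/(aπ/2 − 1) · e^{−aπ(n²−n)}. Then |(aπ−10)/(aπ−2)| · |(1+σ₁)/(1+σ₂)| ≤ 1. -/

import Mathlib

open Real

private lemma exp_ge_pow6 (t : ℝ) (ht : 0 ≤ t) : (t/6)^6 ≤ Real.exp t := by
  have h1 : t/6 ≤ Real.exp (t/6) := by
    have := Real.add_one_le_exp (t/6)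
    linarith
  calc (t/6)^6 ≤ Real.exp (t/6)^6 := pow_le_pow_left₀ (by linarith) h1 6
    _ = Real.exp ((6:ℕ) * (t/6)) := (Real.exp_nat_mul _ 6).symm
    _ = Real.exp t := by push_cast; ring_nf

private lemma exp_ten : (20589:ℝ) ≤ Real.exp 10 := by
  have h : (2.7:ℝ) ≤ Real.exp 1 := by
    have := Real.exp_one_gt_d9; norm_num at this ⊢; linarith
  calc (20589:ℝ) ≤ (2.7:ℝ)^10 := by norm_num
    _ ≤ Real.exp 1 ^ 10 := pow_le_pow_left₀ (by norm_num) h 10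
    _ = Real.exp ((10:ℕ) * 1) := (Real.exp_nat_mul _ 10).symm
    _ = Real.exp 10 := by push_cast; ring_nf

set_option maxHeartbeats 1600000 in
theorem sigma_quotient_bound (a : ℝ) (ha : 2 ≤ a) :
    let σ₁ : ℝ := ∑' n : ℕ, (2 * a * π * (((n : ℝ) + 2) - 1/2)^6 - 5 * (((n : ℝ) + 2) - 1/2)^4) /
        (a * π / 32 - 5/16) * Real.exp (-a * π * (((n : ℝ) + 2)^2 - ((n : ℝ) + 2)))
    let σ₂ : ℝ := ∑' n : ℕ, (2 * a * π * (((n : ℝ) + 2) - 1/2)^2 - 1) / (a * π / 2 - 1) *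
        Real.exp (-a * π * (((n : ℝ) + 2)^2 - ((n : ℝ) + 2)))
    |(a * π - 10) / (a * π - 2)| * |(1 + σ₁) / (1 + σ₂)| ≤ 1 := by
  intro σ₁ σ₂
  have hπ : (3:ℝ) < π := Real.pi_gt_three
  have hx6 : 6 < a * π := by nlinarith
  set x := a * π with hxdef
  -- the exponential factor
  set E : ℕ → ℝ := fun n => Real.exp (-x * (((n : ℝ) + 2)^2 - ((n : ℝ) + 2))) with hE
  have hEpos : ∀ n, 0 < E n := fun n => Real.exp_pos _
  -- σ₂ is nonnegative
  have hσ₂ : 0 ≤ σ₂ := by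
    apply tsum_nonneg
    intro n
    apply mul_nonneg _ (Real.exp_nonneg _)
    apply div_nonneg _ (by linarith : (0:ℝ) ≤ x/2 - 1)
    have hn : (0:ℝ) ≤ (n:ℝ) := n.cast_nonneg
    nlinarith [sq_nonneg ((n:ℝ) + 3/2)]
  -- the normalized series for σ₁
  set f : ℕ → ℝ := fun n =>
      (2 * x * (((n : ℝ) + 2) - 1/2)^6 - 5 * (((n : ℝ) + 2) - 1/2)^4) * E n with hf
  have hfnonneg : ∀ n, 0 ≤ f n := by
    intro n
    apply mul_nonneg _ (Real.exp_nonneg _)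
    have hn : (0:ℝ) ≤ (n:ℝ) := n.cast_nonneg
    have h2 : (9/4:ℝ) ≤ (((n:ℝ) + 2) - 1/2)^2 := by nlinarith
    have h4 : (0:ℝ) ≤ (((n:ℝ) + 2) - 1/2)^4 := by positivity
    nlinarith [h4, h2, mul_nonneg h4 (sub_nonneg.mpr h2)]
  -- per-term geometric bound
  have hbound : ∀ n, f n ≤ (1/8) * (1/2)^n := by
    intro n
    have hn : (0:ℝ) ≤ (n:ℝ) := n.cast_nonneg
    have hm6 : (((n:ℝ) + 2) - 1/2)^6 ≤ 15625/64 * Real.exp (x * n) := by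
      cases n with
      | zero =>
        simp only [Nat.cast_zero, mul_zero, Real.exp_zero]
        norm_num
      | succ k =>
        have hk : (0:ℝ) ≤ (k:ℝ) := k.cast_nonneg
        have h1 : ((k:ℝ) + 1 + 2) - 1/2 ≤ 5/2 * ((k:ℝ)+1) := by linarith
        have h0 : (0:ℝ) ≤ ((k:ℝ) + 1 + 2) - 1/2 := by linarith
        have h2 : (((k:ℝ) + 1 + 2) - 1/2)^6 ≤ (5/2 * ((k:ℝ)+1))^6 :=
          pow_le_pow_left₀ h0 h1 6
        have h3 : ((k:ℝ)+1)^6 ≤ Real.exp (x * ((k:ℝ)+1)) := by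
          have ht : (0:ℝ) ≤ x * ((k:ℝ)+1) := by nlinarith
          have h4 : (k:ℝ)+1 ≤ x * ((k:ℝ)+1) / 6 := by nlinarith
          calc ((k:ℝ)+1)^6 ≤ (x * ((k:ℝ)+1) / 6)^6 := pow_le_pow_left₀ (by linarith) h4 6
            _ ≤ Real.exp (x * ((k:ℝ)+1)) := exp_ge_pow6 _ ht
        push_cast
        calc (((k:ℝ) + 1 + 2) - 1/2)^6 ≤ (5/2 * ((k:ℝ)+1))^6 := h2
          _ = 15625/64 * ((k:ℝ)+1)^6 := by ring
          _ ≤ 15625/64 * Real.exp (x * ((k:ℝ)+1)) := by nlinarith [h3]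
    have step1 : f n ≤ 2 * x * (15625/64 * Real.exp (x * n)) * E n := by
      have h4 : (0:ℝ) ≤ 5 * (((n:ℝ) + 2) - 1/2)^4 := by positivity
      have := (hEpos n).le
      have hmono : 2 * x * (((n:ℝ) + 2) - 1/2)^6 ≤ 2 * x * (15625/64 * Real.exp (x * n)) := by
        nlinarith [hm6]
      calc f n ≤ 2 * x * (((n:ℝ) + 2) - 1/2)^6 * E n := by
              apply mul_le_mul_of_nonneg_right _ this
              linarith
        _ ≤ 2 * x * (15625/64 * Real.exp (x * n)) * E n :=
              mul_le_mul_of_nonneg_right hmono this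
    have step2 : 2 * x * (15625/64 * Real.exp (x * n)) * E n
        = 15625/32 * x * Real.exp (-(x * ((n:ℝ)^2 + 2*n + 2))) := by
      simp only [hE]
      rw [show 2 * x * (15625/64 * Real.exp (x * n)) * Real.exp (-x * (((n:ℝ) + 2)^2 - ((n:ℝ) + 2)))
          = 15625/32 * x * (Real.exp (x * n) * Real.exp (-x * (((n:ℝ) + 2)^2 - ((n:ℝ) + 2)))) from by ring,
        ← Real.exp_add]
      congr 1
      ring
    have step3 : Real.exp (-(x * ((n:ℝ)^2 + 2*n + 2))) ≤ Real.exp (-(2*x)) * Real.exp (-(2*x))^n := by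
      have h5 : Real.exp (-(x * ((n:ℝ)^2 + 2*n + 2))) ≤ Real.exp (-(2 * x * ((n:ℝ)+1))) := by
        apply Real.exp_le_exp.mpr
        nlinarith [sq_nonneg (n:ℝ)]
      have h6 : Real.exp (-(2 * x * ((n:ℝ)+1))) = Real.exp (-(2*x)) * Real.exp (-(2*x))^n := by
        rw [← Real.exp_nat_mul, ← Real.exp_add]
        congr 1
        ring
      rw [← h6]
      exact h5
    have hA : 15625/32 * x * Real.exp (-(2*x)) ≤ 1/8 := by
      have h7 : x ≤ 4 * Real.exp (x/4) := by
        have := Real.add_one_le_exp (x/4)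
        nlinarith [Real.exp_pos (x/4)]
      have h8 : Real.exp (x/4) * Real.exp (-(2*x)) = Real.exp (-(7*x/4)) := by
        rw [← Real.exp_add]; congr 1; ring
      have h9 : Real.exp (-(7*x/4)) ≤ Real.exp (-10) := by
        apply Real.exp_le_exp.mpr; linarith
      have h10 : Real.exp (-10) ≤ 1/20589 := by
        have hmul : Real.exp (-10) * Real.exp 10 = 1 := by
          rw [← Real.exp_add]; norm_num
        nlinarith [exp_ten, (Real.exp_pos (-10)).le]
      have hxE : x * Real.exp (-(2*x)) ≤ 4 / 20589 := by
        have hEp := (Real.exp_pos (-(2*x))).le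
        calc x * Real.exp (-(2*x)) ≤ 4 * Real.exp (x/4) * Real.exp (-(2*x)) :=
              mul_le_mul_of_nonneg_right h7 hEp
          _ = 4 * Real.exp (-(7*x/4)) := by rw [mul_assoc, h8]
          _ ≤ 4 * Real.exp (-10) := by linarith [h9]
          _ ≤ 4 / 20589 := by linarith [h10]
      nlinarith [hxE]
    have hr : Real.exp (-(2*x)) ≤ 1/2 := by
      have h11 : Real.exp (-(2*x)) ≤ Real.exp (-1) := Real.exp_le_exp.mpr (by linarith)
      have h12 : Real.exp (-1) ≤ 1/2 := by
        have hmul : Real.exp (-1) * Real.exp 1 = 1 := by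
          rw [← Real.exp_add]; norm_num
        have h2e : (2:ℝ) ≤ Real.exp 1 := by
          have := Real.exp_one_gt_d9; norm_num at this; linarith
        nlinarith [(Real.exp_pos (-1)).le]
      linarith
    have hrpow : Real.exp (-(2*x))^n ≤ (1/2:ℝ)^n :=
      pow_le_pow_left₀ (Real.exp_nonneg _) hr n
    calc f n ≤ 2 * x * (15625/64 * Real.exp (x * n)) * E n := step1
      _ = 15625/32 * x * Real.exp (-(x * ((n:ℝ)^2 + 2*n + 2))) := step2
      _ ≤ 15625/32 * x * (Real.exp (-(2*x)) * Real.exp (-(2*x))^n) := by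
            nlinarith [step3]
      _ = (15625/32 * x * Real.exp (-(2*x))) * Real.exp (-(2*x))^n := by ring
      _ ≤ (1/8) * (1/2)^n := by
            apply mul_le_mul hA hrpow (by positivity) (by norm_num)
  -- summability and sum bound
  have hg : Summable (fun n : ℕ => (1/8:ℝ) * (1/2)^n) := summable_geometric_two.mul_left _
  have hfs : Summable f := Summable.of_nonneg_of_le hfnonneg hbound hg
  have hS : ∑' n, f n ≤ 1/4 := by
    calc ∑' n, f n ≤ ∑' n : ℕ, (1/8:ℝ) * (1/2)^n := Summable.tsum_le_tsum hbound hfs hg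
      _ = (1/8) * ∑' n : ℕ, (1/2:ℝ)^n := tsum_mul_left
      _ = 1/4 := by rw [tsum_geometric_two]; norm_num
  have hSnn : 0 ≤ ∑' n, f n := tsum_nonneg hfnonneg
  -- case x = 10
  by_cases h10 : x = 10
  · have : x - 10 = 0 := by rw [h10]; ring
    rw [this]
    simp
  -- main case
  have hd : x / 32 - 5/16 ≠ 0 := by
    intro h
    apply h10
    linarith [h]
  have hd' : x - 10 ≠ 0 := sub_ne_zero.mpr h10
  have hσ₁ : σ₁ = 32/(x-10) * ∑' n, f n := by
    have : σ₁ = ∑' n, 32/(x-10) * f n := by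
      apply tsum_congr
      intro n
      simp only [hf, hE]
      rw [← hxdef]
      rw [show x/32 - 5/16 = (x-10)/32 from by ring, div_div_eq_mul_div,
        div_mul_eq_mul_div, div_mul_eq_mul_div]
      congr 1
      rw [hxdef]; ring_nf
    rw [this, tsum_mul_left]
  have key : |x - 10| * |1 + σ₁| ≤ (x - 2) * (1 + σ₂) := by
    have habs : |x - 10| * |1 + σ₁| = |x - 10 + 32 * ∑' n, f n| := by
      rw [← abs_mul]
      congr 1
      have h32 : (x - 10) * (32/(x-10)) = 32 := by field_simp
      rw [hσ₁, mul_add, mul_one, ← mul_assoc, h32]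
    rw [habs]
    have h1 : |x - 10 + 32 * ∑' n, f n| ≤ x - 2 := by
      rw [abs_le]
      constructor <;> nlinarith [hS, hSnn]
    calc |x - 10 + 32 * ∑' n, f n| ≤ x - 2 := h1
      _ ≤ (x - 2) * (1 + σ₂) := by nlinarith
  rw [abs_div, abs_div, abs_of_pos (by linarith : (0:ℝ) < x - 2),
      abs_of_pos (by linarith : (0:ℝ) < 1 + σ₂), div_mul_div_comm, div_le_one (by nlinarith)]
  linarith [key]
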